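/- Let 0 → A →^α B →^β C → 0 be a short exact sequence of modules over a ring Λ, and suppose f : A → A and g : B → B and the identity on C give a morphism of the sequence to itself (β∘g = β, g∘α = α∘f). If f is nilpotent, then β is a split epimorphism. -/
import Mathlib


/-- If `0 → A → B → C → 0` is exact and `(f, g, id_C)` is an endomorphism of the
sequence with `f` nilpotent, then `β` is a split epimorphism. -/
theorem stmt_19 {Λ : Type*} [Ring Λ] {A B C : Type*}
    [AddCommGroup A] [Module Λ A] [AddCommGroup B] [Module Λ B]
    [AddCommGroup C] [Module Λ C]
    (α : A →ₗ[Λ] B) (β : B →ₗ[Λ] C)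
    (hinj : Function.Injective α) (hex : Function.Exact α β)
    (hsur : Function.Surjective β)
    (f : A →ₗ[Λ] A) (g : B →ₗ[Λ] B)
    (hcomm₁ : β ∘ₗ g = β) (hcomm₂ : g ∘ₗ α = α ∘ₗ f)
    (hf : IsNilpotent (f : Module.End Λ A)) :
    ∃ s : C →ₗ[Λ] B, β ∘ₗ s = LinearMap.id := by
  obtain ⟨n, hfn⟩ := hf
  have hg : ∀ m : ℕ, β ∘ₗ ((g ^ m : Module.End Λ B) : B →ₗ[Λ] B) = β := by
    intro m
    induction m with
    | zero => simp [Module.End.one_eq_id]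
    | succ k ih =>
        rw [pow_succ, Module.End.mul_eq_comp, ← LinearMap.comp_assoc, ih, hcomm₁]
  have hga : ∀ m : ℕ, ((g ^ m : Module.End Λ B) : B →ₗ[Λ] B) ∘ₗ α
      = α ∘ₗ ((f ^ m : Module.End Λ A) : A →ₗ[Λ] A) := by
    intro m
    induction m with
    | zero => simp [Module.End.one_eq_id]
    | succ k ih =>
        rw [pow_succ', Module.End.mul_eq_comp, LinearMap.comp_assoc, ih,
          ← LinearMap.comp_assoc, hcomm₂, LinearMap.comp_assoc, pow_succ',
          Module.End.mul_eq_comp]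
  set G : B →ₗ[Λ] B := ((g ^ n : Module.End Λ B) : B →ₗ[Λ] B) with hG
  have hker : LinearMap.ker β ≤ LinearMap.ker G := by
    intro x hx
    obtain ⟨a, ha⟩ := (hex x).mp (LinearMap.mem_ker.mp hx)
    have : G (α a) = α ((f ^ n : Module.End Λ A) a) := congrFun (congrArg DFunLike.coe (hga n)) a
    simp only [LinearMap.mem_ker]
    rw [← ha, this, hfn]
    simp
  set e := β.quotKerEquivOfSurjective hsur with he
  refine ⟨(LinearMap.ker β).liftQ G hker ∘ₗ (e.symm : C →ₗ[Λ] B ⧸ LinearMap.ker β), ?_⟩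
  ext c
  obtain ⟨b, hb⟩ := hsur c
  have hsymm : e.symm c = Submodule.Quotient.mk b := by
    rw [LinearEquiv.symm_apply_eq, he]
    simp [LinearMap.quotKerEquivOfSurjective, LinearMap.quotKerEquivRange, ← hb]
  simp only [LinearMap.coe_comp, Function.comp_apply, LinearEquiv.coe_coe, hsymm,
    Submodule.liftQ_apply, LinearMap.id_coe, id_eq]
  have := congrFun (congrArg DFunLike.coe (hg n)) b
  simpa [hb] using this
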